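/- If σ is a 2-fold twist preserving the cubic tessellation of ℝ³ whose axis is parallel to a coordinate axis, then the norm of its translational component is a positive integer; if its axis is parallel to (1,1,0) (up to the point group action), then the norm of its translational component lies in (√2/2)·ℤ. -/

import Mathlib

noncomputable section
open scoped RealInnerProductSpace

abbrev E3 : Type := EuclideanSpace ℝ (Fin 3)

def vec (x y z : ℝ) : E3 := (WithLp.equiv 2 (Fin 3 → ℝ)).symm ![x, y, z]

/-- The vertex set of the cubic tessellation: the integer lattice ℤ³. -/
def latt : Set E3 := {p | ∀ i, ∃ n : ℤ, p i = (n : ℝ)}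

/-- An isometry belongs to the symmetry group [4,3,4] of the cubic tessellation
iff it preserves the integer lattice. -/
def PreservesLatt (f : E3 ≃ᵢ E3) : Prop := ∀ p : E3, p ∈ latt ↔ f p ∈ latt

/-- `f` is a rotation of order `n` about the line through `p` with direction `v`:
it fixes the line pointwise and has order `n` in the isometry group. -/
def IsRotationAbout (f : E3 ≃ᵢ E3) (p v : E3) (n : ℕ) : Prop :=
  v ≠ 0 ∧ (∀ t : ℝ, f (p + t • v) = p + t • v) ∧ orderOf f = n

/-- `f` is a twist (screw motion): the commuting product of a rotation `r` of order `n ≥ 2`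
about the line through `p` in direction `v` with the translation by `w ≠ 0`, `w` parallel to `v`. -/
def IsTwist (f : E3 ≃ᵢ E3) (p v w : E3) (n : ℕ) : Prop :=
  2 ≤ n ∧ w ≠ 0 ∧ (∃ s : ℝ, w = s • v) ∧
  ∃ r : E3 ≃ᵢ E3, IsRotationAbout r p v n ∧ (∀ x, f x = r x + w) ∧ (∀ x, r (x + w) = r x + w)

/-- An isometry fixing `0` preserves the real inner product. -/
lemma aux_inner_map (g : E3 ≃ᵢ E3) (h0 : g 0 = 0) (x y : E3) : ⟪g x, g y⟫ = ⟪x, y⟫ := by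
  have hn : ∀ z : E3, ‖g z‖ = ‖z‖ := by
    intro z
    have := g.dist_eq z 0
    rwa [h0, dist_zero_right, dist_zero_right] at this
  have hd : ‖g x - g y‖ = ‖x - y‖ := by
    rw [← dist_eq_norm, g.dist_eq, dist_eq_norm]
  have e1 := norm_sub_sq_real (g x) (g y)
  have e2 := norm_sub_sq_real x y
  rw [hd, hn x, hn y] at e1
  linarith

/-- If the isometry `r` fixes the line through `p` with direction `v` pointwise, then
`r 0` has zero component along `v`. -/
lemma aux_rot_zero (r : E3 ≃ᵢ E3) (p v : E3)
    (hfix : ∀ t : ℝ, r (p + t • v) = p + t • v) : ⟪(r 0 : E3), v⟫ = 0 := by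
  have hp : r p = p := by have := hfix 0; simpa using this
  have hpv : r (p + v) = p + v := by have := hfix 1; simpa using this
  have e1 : ‖(r 0 : E3) - p‖ = ‖p‖ := by
    have := r.dist_eq 0 p
    rwa [hp, dist_eq_norm, dist_eq_norm, zero_sub, norm_neg] at this
  have e2 : ‖(r 0 : E3) - p - v‖ = ‖p + v‖ := by
    have := r.dist_eq 0 (p + v)
    rwa [hpv, dist_eq_norm, dist_eq_norm, zero_sub, norm_neg, ← sub_sub] at this
  have s1 := norm_sub_sq_real ((r 0 : E3) - p) v
  have s2 := norm_add_sq_real p v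
  rw [e2] at s1
  have hsq : ‖(r 0 : E3) - p‖ ^ 2 = ‖p‖ ^ 2 := by rw [e1]
  have hil : ⟪(r 0 : E3) - p, v⟫ = ⟪(r 0 : E3), v⟫ - ⟪p, v⟫ := inner_sub_left _ _ _
  linarith

/-- For a 2-fold twist preserving the cubic tessellation: if its axis is parallel to a
coordinate axis, the norm of the translational component is a positive integer; if its
axis is parallel to `(1,1,0)` up to the point group, the norm lies in `(√2/2)·ℤ`. -/
theorem stmt4 (f : E3 ≃ᵢ E3) (p v w : E3)
    (hl : PreservesLatt f) (ht : IsTwist f p v w 2) :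
    ((∃ (i : Fin 3) (s : ℝ), s ≠ 0 ∧ v = s • EuclideanSpace.single i (1:ℝ)) →
      ∃ k : ℕ, 0 < k ∧ ‖w‖ = (k : ℝ)) ∧
    ((∃ g : E3 ≃ᵢ E3, PreservesLatt g ∧ g 0 = 0 ∧ ∃ s : ℝ, s ≠ 0 ∧ g v = s • vec 1 1 0) →
      ∃ k : ℤ, ‖w‖ = k * (Real.sqrt 2 / 2)) := by
  obtain ⟨-, hw0, ⟨c, hwc⟩, r, ⟨hv0, hfix, -⟩, hfr, -⟩ := ht
  have hc0 : c ≠ 0 := by rintro rfl; simp at hwc; exact hw0 hwc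
  -- The key identity: ⟪f 0, v⟫ = c * ‖v‖²
  have hkey : ⟪(f 0 : E3), v⟫ = c * ‖v‖ ^ 2 := by
    rw [hfr 0, inner_add_left, aux_rot_zero r p v hfix, zero_add, hwc,
      real_inner_smul_left, real_inner_self_eq_norm_sq]
  have h0latt : (0 : E3) ∈ latt := fun i => ⟨0, by simp⟩
  have hf0 : (f 0 : E3) ∈ latt := (hl 0).mp h0latt
  have hwnorm : ‖w‖ = |c| * ‖v‖ := by rw [hwc, norm_smul, Real.norm_eq_abs]
  constructor
  · rintro ⟨i, s, hs0, rfl⟩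
    have hnv : ‖s • EuclideanSpace.single i (1:ℝ)‖ = |s| := by
      rw [norm_smul, EuclideanSpace.norm_single]; simp
    obtain ⟨n, hn⟩ := hf0 i
    have hinner : ⟪(f 0 : E3), s • EuclideanSpace.single i (1:ℝ)⟫ = s * (n : ℝ) := by
      rw [real_inner_smul_right, EuclideanSpace.inner_single_right]
      simp [hn, mul_comm]
    rw [hinner, hnv, sq_abs] at hkey
    have hcs : c * s = (n : ℝ) := mul_left_cancel₀ hs0 (by linear_combination -hkey)
    have hn0 : n ≠ 0 := by
      rintro rfl
      simp at hcs
      rcases hcs with h | h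
      · exact hc0 h
      · exact hs0 h
    refine ⟨n.natAbs, Int.natAbs_pos.mpr hn0, ?_⟩
    rw [hwnorm, hnv, ← abs_mul, hcs]
    simp [Nat.cast_natAbs]
  · rintro ⟨g, hlg, hg0, s, hs0, hgv⟩
    set q : E3 := g (f 0) with hq
    have hqlatt : q ∈ latt := (hlg (f 0)).mp hf0
    obtain ⟨a, ha⟩ := hqlatt 0
    obtain ⟨b, hb⟩ := hqlatt 1
    have hqv : ⟪q, g v⟫ = ⟪(f 0 : E3), v⟫ := aux_inner_map g hg0 (f 0) v
    have hvec : ⟪q, vec 1 1 0⟫ = (a : ℝ) + b := by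
      simp [PiLp.inner_apply, RCLike.inner_apply, vec, Fin.sum_univ_three, ha, hb]
    have hnv110 : ‖vec 1 1 0‖ = Real.sqrt 2 := by
      rw [EuclideanSpace.norm_eq]
      norm_num [vec, Fin.sum_univ_three, Matrix.cons_val_two, Matrix.vecHead, Matrix.vecTail]
    have hnv : ‖v‖ = |s| * Real.sqrt 2 := by
      have h2 : ‖g v‖ = ‖v‖ := by
        have := g.dist_eq v 0
        rwa [hg0, dist_zero_right, dist_zero_right] at this
      rw [← h2, hgv, norm_smul, Real.norm_eq_abs, hnv110]
    have hmain : c * ‖v‖ ^ 2 = s * ((a : ℝ) + b) := by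
      rw [← hkey, ← hqv, hgv, real_inner_smul_right, hvec]
    have hs2 : Real.sqrt 2 ^ 2 = 2 := Real.sq_sqrt (by norm_num)
    rw [hnv, mul_pow, sq_abs, hs2] at hmain
    have hcs : c * s * 2 = (a : ℝ) + b :=
      mul_left_cancel₀ hs0 (by linear_combination hmain)
    refine ⟨|a + b|, ?_⟩
    rw [hwnorm, hnv, ← mul_assoc, ← abs_mul]
    have hab : ((|a + b| : ℤ) : ℝ) = |c * s| * 2 := by
      push_cast
      rw [← hcs, abs_mul, abs_two]
    rw [hab]
    ring
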